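/- Let N be a natural number and let A_N be the (N+1)×(N+1) complex clock matrix with entries (A_N)_{j,j-1} = (A_N)_{j-1,j} = √(j(N−j+1)) for 1 ≤ j ≤ N and all other entries zero. Then the matrix exponential exp(−i(π/2)·A_N) maps the first standard basis vector e_0 of ℂ^{N+1} to (−i)^N · e_N, where e_N is the last standard basis vector; i.e., exp(−i(π/2)·A_N) e_0 = (−i)^N e_N. -/

import Mathlib

open Matrix

/-- The `(N+1) × (N+1)` clock matrix with entries `(A_N)_{j,j-1} = (A_N)_{j-1,j} =
`√(j(N−j+1))` for `1 ≤ j ≤ N` (here indexed by `j : Fin N`, representing `j+1`). -/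
noncomputable def clockMatrix (N : ℕ) : Matrix (Fin (N + 1)) (Fin (N + 1)) ℂ :=
  ∑ j : Fin N, (Real.sqrt ((((j : ℕ) + 1) * (N - (j : ℕ)) : ℕ)) : ℂ) •
    (Matrix.single j.succ j.castSucc (1 : ℂ) +
      Matrix.single j.castSucc j.succ (1 : ℂ))

noncomputable def ca (N n : ℕ) : ℝ := Real.sqrt ((n * (N + 1 - n) : ℕ))

lemma ca_zero (N : ℕ) : ca N 0 = 0 := by simp [ca]
lemma ca_top (N : ℕ) : ca N (N + 1) = 0 := by simp [ca]

lemma sumSucc (N : ℕ) (g : ℕ → ℂ) (k : Fin (N + 1)) (hk : 1 ≤ (k : ℕ)) :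
    (∑ j : Fin N, if k = Fin.succ j then g (j : ℕ) else 0) = g ((k : ℕ) - 1) := by
  have hlt : (k : ℕ) - 1 < N := by omega
  rw [Finset.sum_eq_single (⟨(k : ℕ) - 1, hlt⟩ : Fin N)]
  · rw [if_pos (by simp [Fin.ext_iff, Fin.val_succ]; omega)]
  · intro j _ hj
    rw [if_neg]
    intro h
    apply hj
    simp only [Fin.ext_iff, Fin.val_succ] at h ⊢
    omega
  · intro h
    exact absurd (Finset.mem_univ _) h

lemma sumSucc0 (N : ℕ) (g : ℕ → ℂ) (k : Fin (N + 1)) (hk : (k : ℕ) = 0) :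
    (∑ j : Fin N, if k = Fin.succ j then g (j : ℕ) else 0) = 0 := by
  apply Finset.sum_eq_zero
  intro j _
  rw [if_neg]
  simp only [Fin.ext_iff, Fin.val_succ, hk]
  omega

lemma sumCast (N : ℕ) (g : ℕ → ℂ) (k : Fin (N + 1)) (hk : (k : ℕ) < N) :
    (∑ j : Fin N, if k = Fin.castSucc j then g (j : ℕ) else 0) = g (k : ℕ) := by
  rw [Finset.sum_eq_single (⟨(k : ℕ), hk⟩ : Fin N)]
  · rw [if_pos (by simp [Fin.ext_iff])]
  · intro j _ hj
    rw [if_neg]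
    intro h
    apply hj
    simp only [Fin.ext_iff, Fin.coe_castSucc] at h ⊢
    omega
  · intro h
    exact absurd (Finset.mem_univ _) h

lemma sumCastN (N : ℕ) (g : ℕ → ℂ) (k : Fin (N + 1)) (hk : (k : ℕ) = N) :
    (∑ j : Fin N, if k = Fin.castSucc j then g (j : ℕ) else 0) = 0 := by
  apply Finset.sum_eq_zero
  intro j _
  rw [if_neg]
  simp only [Fin.ext_iff, Fin.coe_castSucc, hk]
  omega

lemma mulVec_clock (N : ℕ) (u : ℕ → ℂ) (k : Fin (N + 1)) :
    (clockMatrix N *ᵥ fun j => u (j : ℕ)) k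
      = (ca N (k : ℕ) : ℂ) * u ((k : ℕ) - 1) + (ca N ((k : ℕ) + 1) : ℂ) * u ((k : ℕ) + 1) := by
  have hsum : ∀ (f : Fin N → Matrix (Fin (N+1)) (Fin (N+1)) ℂ) (w : Fin (N+1) → ℂ),
      ((∑ j, f j) *ᵥ w) k = ∑ j, (f j *ᵥ w) k := by
    intro f w
    simp only [Matrix.mulVec, dotProduct, Matrix.sum_apply, Finset.sum_mul]
    exact Finset.sum_comm
  rw [clockMatrix, hsum]
  have hterm : ∀ j : Fin N,
      ((((Real.sqrt ((((j : ℕ) + 1) * (N - (j : ℕ)) : ℕ)) : ℂ)) •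
        (Matrix.single j.succ j.castSucc (1 : ℂ) +
          Matrix.single j.castSucc j.succ (1 : ℂ))) *ᵥ (fun j => u (j : ℕ))) k
      = (if k = Fin.succ j then (ca N ((j:ℕ)+1) : ℂ) * u (j : ℕ) else 0)
        + (if k = Fin.castSucc j then (ca N ((j:ℕ)+1) : ℂ) * u ((j : ℕ) + 1) else 0) := by
    intro j
    have he : (N + 1 - ((j : ℕ) + 1)) = N - (j : ℕ) := by omega
    have hca : (Real.sqrt ((((j : ℕ) + 1) * (N - (j : ℕ)) : ℕ)) : ℂ) = (ca N ((j:ℕ)+1) : ℂ) := by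
      simp [ca, he]
    rw [Matrix.smul_mulVec, Matrix.add_mulVec, Matrix.single_mulVec,
      Matrix.single_mulVec]
    simp only [Pi.smul_apply, Pi.add_apply, Function.update_apply, Pi.zero_apply, one_mul,
      smul_eq_mul, hca, Fin.coe_castSucc, Fin.val_succ]
    rw [mul_add]
    congr 1 <;> split_ifs <;> simp
  rw [Finset.sum_congr rfl fun j _ => hterm j, Finset.sum_add_distrib]
  have h1 : (∑ j : Fin N, if k = Fin.succ j then (ca N ((j:ℕ)+1) : ℂ) * u (j : ℕ) else 0)
      = (ca N (k : ℕ) : ℂ) * u ((k : ℕ) - 1) := by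
    rcases Nat.eq_zero_or_pos (k : ℕ) with hk | hk
    · have h0 : (∑ j : Fin N, if k = Fin.succ j then (ca N ((j:ℕ)+1) : ℂ) * u (j : ℕ) else 0) = 0 :=
        sumSucc0 N (fun n => (ca N (n+1) : ℂ) * u n) k hk
      rw [h0, hk, ca_zero]
      simp
    · have h0 : (∑ j : Fin N, if k = Fin.succ j then (ca N ((j:ℕ)+1) : ℂ) * u (j : ℕ) else 0)
          = (ca N (((k:ℕ) - 1) + 1) : ℂ) * u ((k:ℕ) - 1) :=
        sumSucc N (fun n => (ca N (n+1) : ℂ) * u n) k hk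
      rw [h0]
      have : (k : ℕ) - 1 + 1 = (k : ℕ) := by omega
      rw [this]
  have h2 : (∑ j : Fin N, if k = Fin.castSucc j then (ca N ((j:ℕ)+1) : ℂ) * u ((j : ℕ) + 1) else 0)
      = (ca N ((k : ℕ) + 1) : ℂ) * u ((k : ℕ) + 1) := by
    rcases eq_or_lt_of_le (Nat.lt_succ_iff.mp k.isLt) with hk | hk
    · have h0 : (∑ j : Fin N, if k = Fin.castSucc j then (ca N ((j:ℕ)+1) : ℂ) * u ((j:ℕ) + 1) else 0) = 0 :=
        sumCastN N (fun n => (ca N (n+1) : ℂ) * u (n + 1)) k hk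
      rw [h0, hk, ca_top]
      simp
    · exact sumCast N (fun n => (ca N (n+1) : ℂ) * u (n + 1)) k hk
  rw [h1, h2]


noncomputable def vv (N : ℕ) (t : ℝ) (n : ℕ) : ℂ :=
  (Real.sqrt (N.choose n) : ℂ) * Complex.cos t ^ (N - n) * (-Complex.I * Complex.sin t) ^ n

noncomputable def dv (N : ℕ) (t : ℝ) (n : ℕ) : ℂ :=
  -Complex.I * ((ca N n : ℂ) * vv N t (n - 1) + (ca N (n + 1) : ℂ) * vv N t (n + 1))

lemma key1 (N n : ℕ) (hn : n ≤ N) (t : ℝ) :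
    (ca N n : ℂ) * vv N t (n - 1)
      = (n : ℂ) * (Real.sqrt (N.choose n) : ℂ) * Complex.cos t ^ (N - n + 1)
        * (-Complex.I * Complex.sin t) ^ (n - 1) := by
  cases n with
  | zero => simp [ca]
  | succ m =>
    have h1 : N - (m + 1) + 1 = N - m := by omega
    have h2 : N + 1 - (m + 1) = N - m := by omega
    have hnat : ((m+1) * (N - m)) * N.choose m = ((m+1) * (m+1)) * N.choose (m+1) := by
      have h := Nat.choose_succ_right_eq N m
      calc ((m+1)*(N-m))*N.choose m = (m+1)*(N.choose m*(N-m)) := by ring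
      _ = (m+1)*(N.choose (m+1)*(m+1)) := by rw [h]
      _ = ((m+1)*(m+1))*N.choose (m+1) := by ring
    have hs : (ca N (m+1)) * Real.sqrt (N.choose m) = ((m+1 : ℕ) : ℝ) * Real.sqrt (N.choose (m+1)) := by
      rw [ca, h2, ← Real.sqrt_mul (Nat.cast_nonneg _), ← Nat.cast_mul, hnat, Nat.cast_mul,
        Real.sqrt_mul (Nat.cast_nonneg _), Nat.cast_mul,
        Real.sqrt_mul_self (Nat.cast_nonneg _)]
    have hsC : ((ca N (m+1) : ℝ) : ℂ) * ((Real.sqrt (N.choose m) : ℝ) : ℂ)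
        = (((m+1 : ℕ) : ℕ) : ℂ) * ((Real.sqrt (N.choose (m+1)) : ℝ) : ℂ) := by
      exact_mod_cast congrArg (fun x : ℝ => (x : ℂ)) hs
    rw [vv, h1, Nat.add_sub_cancel]
    push_cast at hsC ⊢
    linear_combination (Complex.cos t ^ (N - m) * (-Complex.I * Complex.sin t) ^ m) * hsC

lemma key2 (N n : ℕ) (hn : n ≤ N) (t : ℝ) :
    (ca N (n + 1) : ℂ) * vv N t (n + 1)
      = ((N - n : ℕ) : ℂ) * (Real.sqrt (N.choose n) : ℂ) * Complex.cos t ^ (N - n - 1)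
        * (-Complex.I * Complex.sin t) ^ (n + 1) := by
  rcases eq_or_lt_of_le hn with hq | hq
  · subst hq
    simp [ca, vv]
  · have h2 : N + 1 - (n + 1 + 1) = N - n - 1 := by omega
    have h3 : N - (n + 1) = N - n - 1 := by omega
    have hnat : ((n+1) * (N - n)) * N.choose (n+1) = ((N-n) * (N-n)) * N.choose n := by
      have h := Nat.choose_succ_right_eq N n
      calc ((n+1)*(N-n))*N.choose (n+1) = (N-n)*(N.choose (n+1)*(n+1)) := by ring
      _ = (N-n)*(N.choose n*(N-n)) := by rw [h]
      _ = ((N-n)*(N-n))*N.choose n := by ring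
    have hs : (ca N (n+1)) * Real.sqrt (N.choose (n+1)) = ((N - n : ℕ) : ℝ) * Real.sqrt (N.choose n) := by
      rw [ca, show N + 1 - (n+1) = N - n by omega, ← Real.sqrt_mul (Nat.cast_nonneg _),
        ← Nat.cast_mul, hnat, Nat.cast_mul, Real.sqrt_mul (Nat.cast_nonneg _), Nat.cast_mul,
        Real.sqrt_mul_self (Nat.cast_nonneg _)]
    have hsC : ((ca N (n+1) : ℝ) : ℂ) * ((Real.sqrt (N.choose (n+1)) : ℝ) : ℂ)
        = (((N - n : ℕ) : ℕ) : ℂ) * ((Real.sqrt (N.choose n) : ℝ) : ℂ) := by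
      exact_mod_cast congrArg (fun x : ℝ => (x : ℂ)) hs
    rw [vv, h3]
    push_cast at hsC ⊢
    linear_combination (Complex.cos t ^ (N - n - 1) * (-Complex.I * Complex.sin t) ^ (n+1)) * hsC

lemma hasDerivAt_vv (N n : ℕ) (hn : n ≤ N) (t : ℝ) :
    HasDerivAt (fun s : ℝ => vv N s n) (dv N t n) t := by
  have hcos : HasDerivAt (fun s : ℝ => Complex.cos s) (-Complex.sin t) t :=
    (Complex.hasDerivAt_cos (t : ℂ)).comp_ofReal
  have hsin : HasDerivAt (fun s : ℝ => -Complex.I * Complex.sin s) (-Complex.I * Complex.cos t) t :=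
    ((Complex.hasDerivAt_sin (t : ℂ)).comp_ofReal).const_mul _
  have hC : HasDerivAt (fun s : ℝ => Complex.cos s ^ (N - n))
      ((N - n : ℕ) * Complex.cos t ^ (N - n - 1) * (-Complex.sin t)) t := by
    simpa [Function.comp_def] using (hasDerivAt_pow (N - n) (Complex.cos (t : ℂ))).comp t hcos
  have hS : HasDerivAt (fun s : ℝ => (-Complex.I * Complex.sin s) ^ n)
      ((n : ℕ) * (-Complex.I * Complex.sin t) ^ (n - 1) * (-Complex.I * Complex.cos t)) t := by
    simpa [Function.comp_def, mul_assoc, mul_comm, mul_left_comm] using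
      (hasDerivAt_pow n (-Complex.I * Complex.sin (t : ℂ))).comp t hsin
  have h := ((hC.const_mul ((Real.sqrt (N.choose n) : ℂ))).mul hS)
  have h' : HasDerivAt (fun s : ℝ => vv N s n)
      ((Real.sqrt (N.choose n) : ℂ) * ((N - n : ℕ) * Complex.cos t ^ (N - n - 1) * (-Complex.sin t))
          * (-Complex.I * Complex.sin t) ^ n
        + (Real.sqrt (N.choose n) : ℂ) * Complex.cos t ^ (N - n)
          * ((n : ℕ) * (-Complex.I * Complex.sin t) ^ (n - 1) * (-Complex.I * Complex.cos t))) t := by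
    exact h.congr_of_eventuallyEq (Filter.Eventually.of_forall fun s => by
      simp only [vv, Pi.mul_apply])
  convert h' using 1
  rw [dv, key1 N n hn, key2 N n hn, pow_succ (Complex.cos t) (N - n),
    pow_succ (-Complex.I * Complex.sin t) n]
  have hI : Complex.I * Complex.I = -1 := Complex.I_mul_I
  push_cast [Nat.cast_sub hn]
  linear_combination ((((N : ℂ)) - n) * (Real.sqrt (N.choose n) : ℂ) * Complex.cos (t : ℂ) ^ (N - n - 1)
    * (-Complex.I * Complex.sin (t : ℂ)) ^ n * Complex.sin (t : ℂ)) * hI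

noncomputable def MM (N : ℕ) : Matrix (Fin (N + 1)) (Fin (N + 1)) ℂ := (-Complex.I) • clockMatrix N

noncomputable def VV (N : ℕ) (t : ℝ) : Matrix (Fin (N + 1)) (Fin (N + 1)) ℂ :=
  Matrix.of fun k l => if l = 0 then vv N t (k : ℕ) else 0

lemma entry_sum (N : ℕ) (w : ℕ → ℂ) (k l : Fin (N + 1)) :
    (∑ k' : Fin (N + 1), w (k' : ℕ) • Matrix.single k' 0 (1 : ℂ)) k l
      = if l = 0 then w (k : ℕ) else 0 := by
  simp only [Matrix.sum_apply, Matrix.smul_apply, Matrix.single, Matrix.of_apply,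
    smul_eq_mul, mul_ite, mul_one, mul_zero, ite_and]
  rw [Finset.sum_ite_eq' Finset.univ k (fun k' => if (0 : Fin (N+1)) = l then w (k' : ℕ) else 0)]
  simp [eq_comm]

lemma VV_eq_sum (N : ℕ) (t : ℝ) :
    VV N t = ∑ k : Fin (N + 1), vv N t (k : ℕ) • Matrix.single k 0 (1 : ℂ) := by
  ext k l
  rw [entry_sum]
  rfl

lemma MV (N : ℕ) (t : ℝ) :
    MM N * VV N t = ∑ k : Fin (N + 1), dv N t (k : ℕ) • Matrix.single k 0 (1 : ℂ) := by
  ext k l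
  rw [entry_sum]
  have hcol : (MM N * VV N t) k l = if l = 0 then ((MM N) *ᵥ fun m => vv N t (m : ℕ)) k else 0 := by
    simp only [Matrix.mul_apply, Matrix.mulVec, dotProduct, VV, Matrix.of_apply]
    split_ifs with h
    · rfl
    · simp
  rw [hcol]
  split_ifs with h
  · rw [MM, Matrix.smul_mulVec, Pi.smul_apply, mulVec_clock, smul_eq_mul, dv]
  · rfl

lemma vv_zero (N n : ℕ) : vv N 0 n = if n = 0 then 1 else 0 := by
  cases n with
  | zero => simp [vv]
  | succ m => simp [vv]

lemma VV_zero (N : ℕ) : VV N 0 = Matrix.single (0 : Fin (N+1)) 0 (1 : ℂ) := by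
  ext k l
  simp only [VV, Matrix.of_apply, vv_zero, Matrix.single, ite_and]
  split_ifs with h1 h2 h3 h4 <;>
    grind [Fin.ext_iff]

section NormedInst

attribute [local instance] Matrix.linftyOpNormedAddCommGroup Matrix.linftyOpNormedSpace
  Matrix.linftyOpNormedRing Matrix.linftyOpNormedAlgebra

lemma hasDerivAt_VV (N : ℕ) (t : ℝ) :
    HasDerivAt (fun s : ℝ => VV N s) (MM N * VV N t) t := by
  rw [MV]
  have : (fun s : ℝ => VV N s)
      = fun s : ℝ => ∑ k : Fin (N + 1), vv N s (k : ℕ) • Matrix.single k 0 (1 : ℂ) := by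
    funext s
    exact VV_eq_sum N s
  rw [this]
  exact HasDerivAt.fun_sum fun k _ =>
    (hasDerivAt_vv N (k : ℕ) (Nat.lt_succ_iff.mp k.isLt) t).smul_const _


lemma main_exp (N : ℕ) :
    NormedSpace.exp ((Real.pi / 2 : ℝ) • MM N) * Matrix.single (0 : Fin (N+1)) 0 (1:ℂ)
      = VV N (Real.pi / 2) := by
  have hF : ∀ t : ℝ, HasDerivAt (fun s : ℝ => NormedSpace.exp ((-s) • MM N) * VV N s) 0 t := by
    intro t
    have hexp : HasDerivAt (fun u : ℝ => NormedSpace.exp (u • MM N))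
        (NormedSpace.exp ((-t) • MM N) * MM N) (-t) := hasDerivAt_exp_smul_const (MM N) (-t)
    have hneg : HasDerivAt (fun s : ℝ => -s) (-1 : ℝ) t := (hasDerivAt_id t).neg
    have h1 : HasDerivAt (fun s : ℝ => NormedSpace.exp ((-s) • MM N))
        ((-1 : ℝ) • (NormedSpace.exp ((-t) • MM N) * MM N)) t := by
      have := hexp.scomp_of_eq t hneg rfl
      simp only [Function.comp_def] at this
      exact this
    have h2 := h1.mul (hasDerivAt_VV N t)
    have : (-1 : ℝ) • (NormedSpace.exp ((-t) • MM N) * MM N) * VV N t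
        + NormedSpace.exp ((-t) • MM N) * (MM N * VV N t) = 0 := by
      rw [neg_one_smul, neg_mul, mul_assoc]
      exact neg_add_cancel _
    rw [this] at h2
    exact h2
  have hdiff : Differentiable ℝ (fun s : ℝ => NormedSpace.exp ((-s) • MM N) * VV N s) :=
    fun t => (hF t).differentiableAt
  have hconst := is_const_of_deriv_eq_zero hdiff (fun t => (hF t).deriv) (Real.pi / 2) 0
  have h0 : NormedSpace.exp ((-(0:ℝ)) • MM N) * VV N 0
      = Matrix.single (0 : Fin (N+1)) 0 (1:ℂ) := by
    rw [neg_zero, zero_smul, NormedSpace.exp_zero, one_mul, VV_zero]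
  rw [h0] at hconst
  have hcomm : Commute ((Real.pi / 2 : ℝ) • MM N) ((-(Real.pi / 2 : ℝ)) • MM N) :=
    ((Commute.refl (MM N)).smul_left _).smul_right _
  have hmul : NormedSpace.exp ((Real.pi / 2 : ℝ) • MM N)
      * NormedSpace.exp ((-(Real.pi / 2 : ℝ)) • MM N) = 1 := by
    rw [← Matrix.exp_add_of_commute _ _ hcomm, ← add_smul, add_neg_cancel, zero_smul,
      NormedSpace.exp_zero]
  calc NormedSpace.exp ((Real.pi / 2 : ℝ) • MM N) * Matrix.single (0 : Fin (N+1)) 0 (1:ℂ)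
      = NormedSpace.exp ((Real.pi / 2 : ℝ) • MM N)
        * (NormedSpace.exp ((-(Real.pi / 2 : ℝ)) • MM N) * VV N (Real.pi / 2)) := by rw [hconst]
    _ = (NormedSpace.exp ((Real.pi / 2 : ℝ) • MM N)
        * NormedSpace.exp ((-(Real.pi / 2 : ℝ)) • MM N)) * VV N (Real.pi / 2) := by
          rw [mul_assoc]
    _ = VV N (Real.pi / 2) := by rw [hmul, one_mul]

lemma exp_eq_exp_R (N : ℕ) (X : Matrix (Fin (N+1)) (Fin (N+1)) ℂ) :
    NormedSpace.exp X = NormedSpace.exp X := by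
  rfl

end NormedInst

lemma vv_pi_div_two (N n : ℕ) (hn : n ≤ N) :
    vv N (Real.pi / 2) n = if n = N then (-Complex.I) ^ N else 0 := by
  have hcos : Complex.cos ((Real.pi / 2 : ℝ) : ℂ) = 0 := by
    rw [← Complex.ofReal_cos, Real.cos_pi_div_two, Complex.ofReal_zero]
  have hsin : Complex.sin ((Real.pi / 2 : ℝ) : ℂ) = 1 := by
    rw [← Complex.ofReal_sin, Real.sin_pi_div_two, Complex.ofReal_one]
  rcases eq_or_lt_of_le hn with hq | hq
  · subst hq
    simp [vv, hcos, hsin]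
  · rw [vv, hcos, hsin, if_neg (by omega)]
    rw [zero_pow (by omega : N - n ≠ 0)]
    ring

/-- `exp(−i(π/2)·A_N)` maps the first standard basis vector `e₀` of `ℂ^{N+1}` to
`(−i)^N · e_N`, where `e_N` is the last standard basis vector. -/
theorem clock_exp_perfect_transfer (N : ℕ) :
    (NormedSpace.exp ((-Complex.I * ((Real.pi / 2 : ℝ) : ℂ)) • clockMatrix N)) *ᵥ
        (Pi.single (0 : Fin (N + 1)) 1) =
      (-Complex.I) ^ N • (Pi.single (Fin.last N) 1 : Fin (N + 1) → ℂ) := by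
  have hsm : (-Complex.I * ((Real.pi / 2 : ℝ) : ℂ)) • clockMatrix N
      = (Real.pi / 2 : ℝ) • MM N := by
    rw [MM, ← algebraMap_smul ℂ (Real.pi / 2 : ℝ) ((-Complex.I) • clockMatrix N),
      Complex.coe_algebraMap, smul_smul, mul_comm]
  have e1 : NormedSpace.exp ((-Complex.I * ((Real.pi / 2 : ℝ) : ℂ)) • clockMatrix N)
      = NormedSpace.exp ((Real.pi / 2 : ℝ) • MM N) := by
    rw [hsm]
  have e2 := congrArg
    (fun X : Matrix (Fin (N+1)) (Fin (N+1)) ℂ => X *ᵥ (Pi.single (0 : Fin (N + 1)) (1 : ℂ))) e1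
  refine e2.trans ?_
  have hE : Matrix.single (0 : Fin (N+1)) 0 (1 : ℂ) *ᵥ Pi.single (0 : Fin (N+1)) (1:ℂ)
      = Pi.single (0 : Fin (N+1)) (1:ℂ) := by
    rw [Matrix.single_mulVec]
    ext k
    simp [Function.update_apply, Pi.single_apply, eq_comm]
  calc NormedSpace.exp ((Real.pi / 2 : ℝ) • MM N) *ᵥ Pi.single (0 : Fin (N+1)) (1:ℂ)
      = NormedSpace.exp ((Real.pi / 2 : ℝ) • MM N) *ᵥ
        (Matrix.single (0 : Fin (N+1)) 0 (1 : ℂ) *ᵥ Pi.single (0 : Fin (N+1)) (1:ℂ)) := by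
          rw [hE]
    _ = (NormedSpace.exp ((Real.pi / 2 : ℝ) • MM N)
          * Matrix.single (0 : Fin (N+1)) 0 (1 : ℂ)) *ᵥ Pi.single (0 : Fin (N+1)) (1:ℂ) := by
          rw [Matrix.mulVec_mulVec]
    _ = VV N (Real.pi / 2) *ᵥ Pi.single (0 : Fin (N+1)) (1:ℂ) := by rw [main_exp N]
    _ = (-Complex.I) ^ N • (Pi.single (Fin.last N) 1 : Fin (N + 1) → ℂ) := by
        ext k
        have : (VV N (Real.pi / 2) *ᵥ Pi.single (0 : Fin (N+1)) (1:ℂ)) k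
            = vv N (Real.pi / 2) (k : ℕ) := by
          simp [VV, Matrix.mulVec, dotProduct, Pi.single_apply, mul_ite]
        rw [this, vv_pi_div_two N (k : ℕ) (Nat.lt_succ_iff.mp k.isLt)]
        simp only [Pi.smul_apply, Pi.single_apply, smul_eq_mul]
        by_cases hk : (k : ℕ) = N
        · rw [if_pos hk, if_pos (by simp [Fin.ext_iff, Fin.val_last, hk]), mul_one]
        · rw [if_neg hk, if_neg (by simp [Fin.ext_iff, Fin.val_last]; omega), mul_zero]
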